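/- For every nonnegative integer i there exists d0(i) such that for all real d ≥ d0(i) the function f(c) = (1/c)·[ c·log((c·d − i)/(d − i)) − (c − 1)·d/(d − i) ], defined for real c with c·d > i, satisfies: f(1) = 0; f is strictly decreasing on the interval [i/(d − i), 1]; f is strictly increasing on the interval [1, ∞); and consequently f(c) ≥ 0 for all c in [i/(d − i), ∞). -/

import Mathlib

/-- The function `f(c) = (1/c)·[c·log((cd-i)/(d-i)) - (c-1)·d/(d-i)]` from Lemma 5.1. -/
noncomputable def fErr (i : ℕ) (d : ℝ) (c : ℝ) : ℝ :=
  (1/c) * (c * Real.log ((c * d - i)/(d - i)) - (c - 1) * d/(d - i))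

lemma fErr_hasDerivAt (i : ℕ) {d c : ℝ} (hd : (i : ℝ) < d) (hc : c ≠ 0)
    (hcd : (i : ℝ) < c * d) :
    HasDerivAt (fErr i d) (d * (c - 1) * (c * (d - i) - i) / ((c * d - i) * (d - i) * c ^ 2)) c := by
  have hdi : (0 : ℝ) < d - i := by linarith
  have hcd' : (0 : ℝ) < c * d - i := by linarith
  have hu : (0 : ℝ) < (c * d - i) / (d - i) := div_pos hcd' hdi
  have h1 : HasDerivAt (fun x : ℝ => (x * d - i) / (d - i)) (d / (d - i)) c := by
    simpa using (((hasDerivAt_id c).mul_const d).sub_const (i : ℝ)).div_const (d - i)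
  have hL : HasDerivAt (fun x : ℝ => Real.log ((x * d - i) / (d - i)))
      ((d / (d - i)) / ((c * d - i) / (d - i))) c := h1.log (ne_of_gt hu)
  have h3 : HasDerivAt (fun x : ℝ => (x - 1) * d / (d - i)) (1 * d / (d - i)) c := by
    simpa using (((hasDerivAt_id c).sub_const (1 : ℝ)).mul_const d).div_const (d - i)
  have h2 : HasDerivAt
      (fun x : ℝ => x * Real.log ((x * d - i) / (d - i)) - (x - 1) * d / (d - i))
      (1 * Real.log ((c * d - i) / (d - i)) + c * ((d / (d - i)) / ((c * d - i) / (d - i)))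
        - 1 * d / (d - i)) c := ((hasDerivAt_id c).mul hL).sub h3
  have hinv : HasDerivAt (fun x : ℝ => 1 / x) (-(1 / c ^ 2)) c := by
    simpa [one_div] using hasDerivAt_inv hc
  have := hinv.mul h2
  refine HasDerivAt.congr_deriv (f := fErr i d) this ?_
  have hdi0 : d - i ≠ 0 := ne_of_gt hdi
  have hcd0 : c * d - i ≠ 0 := ne_of_gt hcd'
  field_simp
  ring

theorem fErr_monotone_and_nonneg (i : ℕ) :
    ∃ d0 : ℝ, ∀ d : ℝ, d0 ≤ d →
      fErr i d 1 = 0 ∧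
      StrictAntiOn (fErr i d) (Set.Icc ((i : ℝ)/(d - i)) 1 ∩ {c : ℝ | (i : ℝ) < c * d}) ∧
      StrictMonoOn (fErr i d) (Set.Ici 1) ∧
      (∀ c : ℝ, (i : ℝ)/(d - i) ≤ c → (i : ℝ) < c * d → 0 ≤ fErr i d c) := by
  refine ⟨2 * i + 1, fun d hd => ?_⟩
  have hi0 : (0 : ℝ) ≤ i := Nat.cast_nonneg i
  have hid : (i : ℝ) < d := by linarith
  have hdi : (0 : ℝ) < d - i := by linarith
  have hd0 : (0 : ℝ) < d := by linarith
  have hdi0 : d - i ≠ 0 := ne_of_gt hdi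
  have ha0 : (0 : ℝ) ≤ (i : ℝ) / (d - i) := div_nonneg hi0 hdi.le
  have ha1 : (i : ℝ) / (d - i) < 1 := by
    rw [div_lt_one hdi]; linarith
  -- rewrite the halfspace as Ioi
  have hset : {c : ℝ | (i : ℝ) < c * d} = Set.Ioi ((i : ℝ) / d) := by
    ext c
    simp only [Set.mem_setOf_eq, Set.mem_Ioi, div_lt_iff₀ hd0]
  have hf1 : fErr i d 1 = 0 := by
    simp [fErr, div_self hdi0]
  -- derivative sign facts
  have hderiv : ∀ c : ℝ, c ≠ 0 → (i : ℝ) < c * d →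
      deriv (fErr i d) c = d * (c - 1) * (c * (d - i) - i) / ((c * d - i) * (d - i) * c ^ 2) :=
    fun c hc hcd => (fErr_hasDerivAt i hid hc hcd).deriv
  have hcont : ∀ c : ℝ, c ≠ 0 → (i : ℝ) < c * d → ContinuousAt (fErr i d) c :=
    fun c hc hcd => (fErr_hasDerivAt i hid hc hcd).continuousAt
  -- The anti part
  have hS : Set.Icc ((i : ℝ)/(d - i)) 1 ∩ {c : ℝ | (i : ℝ) < c * d}
      = Set.Icc ((i : ℝ)/(d - i)) 1 ∩ Set.Ioi ((i : ℝ) / d) := by rw [hset]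
  have hmemS : ∀ c ∈ Set.Icc ((i : ℝ)/(d - i)) 1 ∩ {c : ℝ | (i : ℝ) < c * d},
      0 < c ∧ (i : ℝ) < c * d := by
    rintro c ⟨⟨hc1, _⟩, hc3⟩
    have hcd : (i : ℝ) < c * d := hc3
    refine ⟨?_, hcd⟩
    rcases lt_or_eq_of_le ha0 with h | h
    · linarith
    · -- i/(d-i) = 0
      nlinarith [mul_pos (lt_of_lt_of_le (lt_of_le_of_lt hi0 hcd) le_rfl) hd0]
  have hanti : StrictAntiOn (fErr i d)
      (Set.Icc ((i : ℝ)/(d - i)) 1 ∩ {c : ℝ | (i : ℝ) < c * d}) := by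
    rw [hS]
    apply strictAntiOn_of_deriv_neg ((convex_Icc _ _).inter (convex_Ioi _))
    · intro c hc
      have hmem := hmemS c (by rw [hS]; exact hc)
      exact (hcont c (ne_of_gt hmem.1) hmem.2).continuousWithinAt
    · intro c hc
      rw [interior_inter, interior_Icc, isOpen_Ioi.interior_eq] at hc
      obtain ⟨⟨hc1, hc2⟩, hc3⟩ := hc
      have hcd : (i : ℝ) < c * d := by rw [Set.mem_Ioi, div_lt_iff₀ hd0] at hc3; exact hc3
      have hc0 : 0 < c := lt_of_le_of_lt ha0 hc1
      rw [hderiv c (ne_of_gt hc0) hcd]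
      apply div_neg_of_neg_of_pos
      · have h1 : c * (d - i) - i > 0 := by
          rw [div_lt_iff₀ hdi] at hc1; linarith
        have h2 : c - 1 < 0 := by linarith
        exact mul_neg_of_neg_of_pos (mul_neg_of_pos_of_neg hd0 h2) h1
      · have : (0:ℝ) < c * d - i := by linarith
        positivity
  -- The mono part
  have hmono : StrictMonoOn (fErr i d) (Set.Ici 1) := by
    apply strictMonoOn_of_deriv_pos (convex_Ici _)
    · intro c hc
      have hc1 : (1 : ℝ) ≤ c := hc
      have hc0 : 0 < c := by linarith
      have hcd : (i : ℝ) < c * d := by nlinarith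
      exact (hcont c (ne_of_gt hc0) hcd).continuousWithinAt
    · intro c hc
      rw [interior_Ici] at hc
      have hc1 : (1 : ℝ) < c := hc
      have hc0 : 0 < c := by linarith
      have hcd : (i : ℝ) < c * d := by nlinarith
      rw [hderiv c (ne_of_gt hc0) hcd]
      apply div_pos
      · have h1 : c * (d - i) - i > 0 := by nlinarith
        exact mul_pos (mul_pos hd0 (by linarith : (0:ℝ) < c - 1)) h1
      · have : (0:ℝ) < c * d - i := by linarith
        positivity
  refine ⟨hf1, hanti, hmono, ?_⟩
  intro c hc1 hcd
  rcases le_or_gt 1 c with h | h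
  · rcases eq_or_lt_of_le h with h' | h'
    · rw [← h', hf1]
    · have := hmono (Set.mem_Ici.mpr le_rfl) (Set.mem_Ici.mpr h) h'
      rw [hf1] at this
      linarith
  · have hcS : c ∈ Set.Icc ((i : ℝ)/(d - i)) 1 ∩ {c : ℝ | (i : ℝ) < c * d} :=
      ⟨⟨hc1, h.le⟩, hcd⟩
    have h1S : (1 : ℝ) ∈ Set.Icc ((i : ℝ)/(d - i)) 1 ∩ {c : ℝ | (i : ℝ) < c * d} :=
      ⟨⟨ha1.le, le_rfl⟩, by simpa using hid⟩
    have := hanti hcS h1S h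
    rw [hf1] at this
    linarith
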